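/- Let P be an orthogonal projection and U a unitary operator on a complex Hilbert space, and set T = P - U*PU. Then for a vector φ: Tφ = φ if and only if Pφ = φ and PUPφ = 0. Consequently ker(T - 1) = ker(PUP + (1 - P)). -/

import Mathlib

/-- For T = P - U*PU: Tφ = φ iff Pφ = φ and PUPφ = 0, and
ker(T - 1) = ker(PUP + (1 - P)). -/
theorem stmt_4 {H : Type*} [NormedAddCommGroup H] [InnerProductSpace ℂ H] [CompleteSpace H]
    (P U : H →L[ℂ] H)
    (hP : ContinuousLinearMap.adjoint P = P) (hP2 : P * P = P)
    (hU1 : ContinuousLinearMap.adjoint U * U = 1) (hU2 : U * ContinuousLinearMap.adjoint U = 1) :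
    (∀ φ : H, (P - ContinuousLinearMap.adjoint U * P * U) φ = φ ↔
        (P φ = φ ∧ P (U (P φ)) = 0)) ∧
    LinearMap.ker (((P - ContinuousLinearMap.adjoint U * P * U) - 1 : H →L[ℂ] H) : H →ₗ[ℂ] H) =
      LinearMap.ker ((P * U * P + (1 - P) : H →L[ℂ] H) : H →ₗ[ℂ] H) := by
  have hPP : ∀ x : H, P (P x) = P x := fun x =>
    congrFun (congrArg DFunLike.coe hP2) x
  have hinnerP : ∀ x y : H, (inner ℂ x (P y) : ℂ) = inner ℂ (P x) y := by
    intro x y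
    conv_lhs => rw [← hP]
    exact ContinuousLinearMap.adjoint_inner_right P x y
  have key : ∀ φ : H, (P - ContinuousLinearMap.adjoint U * P * U) φ = φ ↔
      (P φ = φ ∧ P (U (P φ)) = 0) := by
    intro φ
    constructor
    · intro h
      simp only [ContinuousLinearMap.sub_apply, ContinuousLinearMap.mul_apply] at h
      have hin : (inner ℂ φ (P φ) : ℂ) - inner ℂ φ ((ContinuousLinearMap.adjoint U) (P (U φ)))
          = inner ℂ φ φ := by
        rw [← inner_sub_right, h]
      have e1 : (inner ℂ φ (P φ) : ℂ) = ((‖P φ‖^2 : ℝ) : ℂ) := by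
        rw [show P φ = P (P φ) from (hPP φ).symm, hinnerP, hPP, inner_self_eq_norm_sq_to_K]
        norm_cast
      have e2 : (inner ℂ φ ((ContinuousLinearMap.adjoint U) (P (U φ))) : ℂ)
          = ((‖P (U φ)‖^2 : ℝ) : ℂ) := by
        rw [ContinuousLinearMap.adjoint_inner_right,
          show P (U φ) = P (P (U φ)) from (hPP (U φ)).symm, hinnerP, hPP,
          inner_self_eq_norm_sq_to_K]
        norm_cast
      have e3 : (inner ℂ φ φ : ℂ) = ((‖φ‖^2 : ℝ) : ℂ) := by
        rw [inner_self_eq_norm_sq_to_K]; norm_cast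
      have h4 : (inner ℂ (P φ) φ : ℂ) = inner ℂ (P φ) (P φ) := by
        have := hinnerP (P φ) φ
        rw [hPP] at this
        exact this.symm
      have horth : (inner ℂ (P φ) (φ - P φ) : ℂ) = 0 := by
        rw [inner_sub_right, h4, sub_self]
      have hpyth : ‖φ‖^2 = ‖P φ‖^2 + ‖φ - P φ‖^2 := by
        have := norm_add_sq (𝕜 := ℂ) (P φ) (φ - P φ)
        simp only [add_sub_cancel, horth, map_zero, mul_zero, zero_mul, add_zero] at this
        linarith [this]
      have hreal : (‖P φ‖:ℝ)^2 - ‖P (U φ)‖^2 = ‖φ‖^2 := by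
        have h5 := hin
        rw [e1, e2, e3] at h5
        exact_mod_cast h5
      have hz : ‖P (U φ)‖^2 + ‖φ - P φ‖^2 = 0 := by linarith
      have hn1 : ‖P (U φ)‖ = 0 := by
        nlinarith [sq_nonneg ‖P (U φ)‖, sq_nonneg ‖φ - P φ‖,
          norm_nonneg (P (U φ)), norm_nonneg (φ - P φ)]
      have hn2 : ‖φ - P φ‖ = 0 := by
        nlinarith [sq_nonneg ‖P (U φ)‖, sq_nonneg ‖φ - P φ‖,
          norm_nonneg (P (U φ)), norm_nonneg (φ - P φ)]
      have h1 : P (U φ) = 0 := norm_eq_zero.mp hn1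
      have h2 : P φ = φ := by
        have := sub_eq_zero.mp (norm_eq_zero.mp hn2)
        exact this.symm
      exact ⟨h2, by rw [h2, h1]⟩
    · rintro ⟨h1, h2⟩
      simp only [ContinuousLinearMap.sub_apply, ContinuousLinearMap.mul_apply]
      rw [h1] at h2
      rw [h2, map_zero, sub_zero, h1]
  refine ⟨key, ?_⟩
  ext φ
  simp only [LinearMap.mem_ker, ContinuousLinearMap.coe_coe,
    ContinuousLinearMap.sub_apply, ContinuousLinearMap.one_apply,
    ContinuousLinearMap.add_apply, ContinuousLinearMap.mul_apply]
  rw [sub_eq_zero]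
  have hkey := key φ
  simp only [ContinuousLinearMap.sub_apply, ContinuousLinearMap.mul_apply] at hkey
  rw [hkey]
  constructor
  · rintro ⟨h1, h2⟩
    rw [h2, h1]
    simp
  · intro h
    have hap : P (P (U (P φ)) + (φ - P φ)) = 0 := by rw [h, map_zero]
    rw [map_add, map_sub, hPP, hPP] at hap
    simp only [sub_self, add_zero] at hap
    rw [hap, zero_add] at h
    have hPeq : P φ = φ := (sub_eq_zero.mp h).symm
    exact ⟨hPeq, hap⟩
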